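/- Almost sure eventual containment: Suppose the rate-function family satisfies the growth conditions (G1) and (G2), I_θ(0) = 0 for all θ ∈ Θ, J : Θ → ℝ is uniformly continuous on bounded subsets of Θ, the LDP lower bound holds at every θ ∈ Θ, and either Θ is open in E or θ̂_T takes values in Θ for all T. Fix r > 0 and δ > 0. Let (H̲_T)_{T>0} and (H̄_T)_{T>0} be eventually equicontinuous families of Borel measurable functions E → ℝ satisfying, for every θ ∈ Θ, limsup_{T→∞} (1/b_T) log P_θ(J(θ) ∉ [H̲_T(θ̂_T), H̄_T(θ̂_T)]) ≤ −r. If θ0 ∈ Θ and θ̂_T → θ0 P_{θ0}-almost surely, then P_{θ0}-almost surely, limsup_{T→∞}(J̄^δ_{T,r}(θ̂_T) − H̄_T(θ̂_T)) ≤ 0 and liminf_{T→∞}(J̲^δ_{T,r}(θ̂_T) − H̲_T(θ̂_T)) ≥ 0. -/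

import Mathlib

set_option autoImplicit false

open Filter Topology Metric Set MeasureTheory

noncomputable section

variable {E : Type*} [NormedAddCommGroup E] [NormedSpace ℝ E]

/-- The sublevel set `S_{θ,r} = {ϑ ∈ E : I_θ(ϑ) ≤ r}` of the rate function. -/
def sublevelSet (I : E → E → ENNReal) (θ : E) (r : ℝ) : Set E :=
  {ϑ : E | I θ ϑ ≤ ENNReal.ofReal r}

/-- The open `δ`-fattening `S^δ_{θ,r}` of the sublevel set, where `S^0_{θ,r} = S_{θ,r}`;
for `δ > 0` it is the set of points at distance `< δ` from `S_{θ,r}`, i.e. the union of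
open balls of radius `δ` around points of `S_{θ,r}`. -/
def fatSublevel (I : E → E → ENNReal) (θ : E) (r δ : ℝ) : Set E :=
  if δ = 0 then sublevelSet I θ r
  else ⋃ ϑ ∈ sublevelSet I θ r, Metric.ball ϑ δ

/-- Growth condition (G1): for sequences `θ_n ∈ Θ` with `sup_n ‖θ_n‖ < ∞` and
`‖ϑ_n‖ → ∞`, `I_{θ_n}(ϑ_n) → ∞`. -/
def GrowthG1 (Θ : Set E) (I : E → E → ENNReal) : Prop :=
  ∀ θs ϑs : ℕ → E, (∀ n, θs n ∈ Θ) → (∃ C : ℝ, ∀ n, ‖θs n‖ ≤ C) →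
    Tendsto (fun n => ‖ϑs n‖) atTop atTop →
    Tendsto (fun n => I (θs n) (ϑs n)) atTop (nhds ⊤)

/-- Growth condition (G2): for sequences `θ_n ∈ Θ` with `‖θ_n‖ → ∞` and
`‖ϑ_n‖/‖θ_n‖ → ∞`, `limsup_n I_{θ_n}(ϑ_n) = ∞`. -/
def GrowthG2 (Θ : Set E) (I : E → E → ENNReal) : Prop :=
  ∀ θs ϑs : ℕ → E, (∀ n, θs n ∈ Θ) →
    Tendsto (fun n => ‖θs n‖) atTop atTop →
    Tendsto (fun n => ‖ϑs n‖ / ‖θs n‖) atTop atTop →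
    Filter.limsup (fun n => I (θs n) (ϑs n)) atTop = ⊤

/-- The upper confidence bound `J̄^δ_{T,r}(θ') = sup {J(θ) : θ ∈ Θ, a_T (θ' - θ) ∈ S^δ_{θ,r}}`. -/
def upperCB (Θ : Set E) (I : E → E → ENNReal) (J : E → ℝ) (r δ : ℝ) (a : ℝ → ℝ)
    (T : ℝ) (θ' : E) : ℝ :=
  sSup (J '' {θ : E | θ ∈ Θ ∧ a T • (θ' - θ) ∈ fatSublevel I θ r δ})

/-- The lower confidence bound `J̲^δ_{T,r}(θ') = inf {J(θ) : θ ∈ Θ, a_T (θ' - θ) ∈ S^δ_{θ,r}}`. -/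
def lowerCB (Θ : Set E) (I : E → E → ENNReal) (J : E → ℝ) (r δ : ℝ) (a : ℝ → ℝ)
    (T : ℝ) (θ' : E) : ℝ :=
  sInf (J '' {θ : E | θ ∈ Θ ∧ a T • (θ' - θ) ∈ fatSublevel I θ r δ})

variable {Ω : Type*} [MeasurableSpace Ω]

/-- LDP lower bound at `θ0` for the family `a_T (θ̂_T − θ0)` with speed `b_T`:
for every open `G ⊆ E`,
`liminf_{T→∞} (1/b_T) log P(a_T(θ̂_T − θ0) ∈ G) ≥ − inf_{ϑ ∈ G} I(ϑ)`. -/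
def LDPLowerAt (P : Measure Ω) (θhat : ℝ → Ω → E) (a b : ℝ → ℝ)
    (Irate : E → ENNReal) (θ0 : E) : Prop :=
  ∀ G : Set E, IsOpen G →
    -(((⨅ ϑ ∈ G, Irate ϑ) : ENNReal) : EReal) ≤
      Filter.liminf
        (fun T => (((b T)⁻¹ : ℝ) : EReal) *
          ENNReal.log (P {ω | a T • (θhat T ω - θ0) ∈ G})) atTop

/-- LDP upper bound at `θ0` for the family `a_T (θ̂_T − θ0)` with speed `b_T`:
for every closed `F ⊆ E`,
`limsup_{T→∞} (1/b_T) log P(a_T(θ̂_T − θ0) ∈ F) ≤ − inf_{ϑ ∈ F} I(ϑ)`. -/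
def LDPUpperAt (P : Measure Ω) (θhat : ℝ → Ω → E) (a b : ℝ → ℝ)
    (Irate : E → ENNReal) (θ0 : E) : Prop :=
  ∀ F : Set E, IsClosed F →
    Filter.limsup
      (fun T => (((b T)⁻¹ : ℝ) : EReal) *
        ENNReal.log (P {ω | a T • (θhat T ω - θ0) ∈ F})) atTop ≤
      -(((⨅ ϑ ∈ F, Irate ϑ) : ENNReal) : EReal)

/-- Eventual equi-upper semicontinuity at a point. -/
def EvEquiUSCAt {W : Type*} [PseudoMetricSpace W] (φ : ℝ → W → ℝ) (w0 : W) : Prop :=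
  ∀ ε > (0 : ℝ), ∃ δ > (0 : ℝ), ∃ T0 > (0 : ℝ),
    ∀ T ≥ T0, ∀ w ∈ Metric.closedBall w0 δ, φ T w - φ T w0 < ε

/-- Eventual equi-lower semicontinuity at a point: `(−φ_T)` is eventually equi-u.s.c. -/
def EvEquiLSCAt {W : Type*} [PseudoMetricSpace W] (φ : ℝ → W → ℝ) (w0 : W) : Prop :=
  EvEquiUSCAt (fun T w => -φ T w) w0

/-- Eventual equicontinuity at a point. -/
def EvEquicontinuousAt {W : Type*} [PseudoMetricSpace W] (φ : ℝ → W → ℝ) (w0 : W) : Prop :=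
  ∀ ε > (0 : ℝ), ∃ δ > (0 : ℝ), ∃ T0 > (0 : ℝ),
    ∀ T ≥ T0, ∀ w ∈ Metric.closedBall w0 δ, |φ T w - φ T w0| < ε

/-! ### Auxiliary lemmas -/

lemma mem_fatSublevel_pos {I : E → E → ENNReal} {θ : E} {r δ : ℝ} (hδ : 0 < δ) {x : E} :
    x ∈ fatSublevel I θ r δ ↔ ∃ ϑ, I θ ϑ ≤ ENNReal.ofReal r ∧ ‖x - ϑ‖ < δ := by
  simp [fatSublevel, hδ.ne', sublevelSet, Metric.mem_ball, dist_eq_norm, Set.mem_iUnion]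

/-- Any admissible parameter eventually lies within `η` of `θ0`. -/
lemma adm_small {Θ : Set E} {I : E → E → ENNReal} {a : ℝ → ℝ}
    (hatop : Tendsto a atTop atTop) (hG1 : GrowthG1 Θ I) (hG2 : GrowthG2 Θ I)
    {r δ : ℝ} (hδ : 0 < δ) {θ0 : E} {f : ℝ → E} (hf : Tendsto f atTop (nhds θ0))
    {η : ℝ} (hη : 0 < η) :
    ∀ᶠ T in atTop, ∀ θ ∈ Θ, a T • (f T - θ) ∈ fatSublevel I θ r δ → ‖θ - θ0‖ ≤ η := by
  by_contra hcon
  rw [Filter.not_eventually] at hcon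
  have hfreq : ∀ n : ℕ, ∃ T : ℝ, (n : ℝ) ≤ T ∧ ∃ θ, θ ∈ Θ ∧
      (a T • (f T - θ) ∈ fatSublevel I θ r δ ∧ η < ‖θ - θ0‖) := by
    intro n
    rcases frequently_atTop.1 hcon (n : ℝ) with ⟨T, hT, hbad⟩
    push_neg at hbad
    rcases hbad with ⟨θ, hθΘ, hmem, hfar⟩
    exact ⟨T, hT, θ, hθΘ, hmem, hfar⟩
  choose Ts hTs θs hθsΘ hmem hfar using hfreq
  have hTtop : Tendsto Ts atTop atTop :=
    tendsto_atTop_mono hTs tendsto_natCast_atTop_atTop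
  have hAtop : Tendsto (fun n => a (Ts n)) atTop atTop := hatop.comp hTtop
  have hftop : Tendsto (fun n => f (Ts n)) atTop (nhds θ0) := hf.comp hTtop
  -- extract the points ϑ certifying membership in the fattened sublevel set
  have hmem' : ∀ n, ∃ ϑ, I (θs n) ϑ ≤ ENNReal.ofReal r ∧
      ‖a (Ts n) • (f (Ts n) - θs n) - ϑ‖ < δ := fun n =>
    (mem_fatSublevel_pos hδ).1 (hmem n)
  choose ϑs hϑI hϑd using hmem'
  -- lower bound on ‖ϑs n‖
  have hnlb : ∀ n, a (Ts n) * ‖f (Ts n) - θs n‖ - δ ≤ ‖ϑs n‖ ∨ a (Ts n) < 0 := by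
    intro n
    rcases lt_or_ge (a (Ts n)) 0 with h | h
    · exact Or.inr h
    · left
      have h1 := norm_sub_norm_le (a (Ts n) • (f (Ts n) - θs n)) (ϑs n)
      have h2 : ‖a (Ts n) • (f (Ts n) - θs n)‖ = a (Ts n) * ‖f (Ts n) - θs n‖ := by
        rw [norm_smul, Real.norm_eq_abs, abs_of_nonneg h]
      have := (hϑd n).le
      nlinarith [norm_nonneg (ϑs n)]
  have hfnear : ∀ᶠ n in atTop, ‖f (Ts n) - θ0‖ ≤ η / 2 := by
    have : ∀ᶠ x in nhds θ0, ‖x - θ0‖ ≤ η / 2 := by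
      have : Metric.closedBall θ0 (η / 2) ∈ nhds θ0 :=
        Metric.closedBall_mem_nhds θ0 (by linarith)
      filter_upwards [this] with x hx
      simpa [dist_eq_norm] using hx
    exact hftop.eventually this
  have hAnn : ∀ᶠ n in atTop, 0 ≤ a (Ts n) := hAtop.eventually (eventually_ge_atTop 0)
  -- ‖ϑs n‖ → ∞
  have hϑlb : ∀ᶠ n in atTop, a (Ts n) * (η / 2) - δ ≤ ‖ϑs n‖ := by
    filter_upwards [hfnear, hAnn] with n hn hA
    rcases hnlb n with h | h
    · have hd : η / 2 ≤ ‖f (Ts n) - θs n‖ := by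
        have h1 := norm_sub_norm_le (θs n - θ0) (θs n - f (Ts n))
        have h2 : θs n - θ0 - (θs n - f (Ts n)) = f (Ts n) - θ0 := by abel
        rw [h2] at h1
        have h3 : ‖θs n - f (Ts n)‖ = ‖f (Ts n) - θs n‖ := norm_sub_rev _ _
        have := (hfar n).le
        linarith
      nlinarith
    · linarith
  have hϑtop : Tendsto (fun n => ‖ϑs n‖) atTop atTop := by
    refine tendsto_atTop_mono' atTop hϑlb ?_
    have h1 : Tendsto (fun n => a (Ts n) * (η / 2)) atTop atTop :=
      hAtop.atTop_mul_const (by linarith)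
    exact tendsto_atTop_add_const_right atTop (-δ)
      (by simpa [sub_eq_add_neg] using h1) |>.congr (fun n => by ring_nf)
  -- contradiction via G1 or G2
  by_cases hbdd : ∃ C, {n | ‖θs n‖ ≤ C}.Infinite
  · rcases hbdd with ⟨C, hC⟩
    rcases Filter.extraction_of_frequently_atTop
      (Nat.frequently_atTop_iff_infinite.2 hC) with ⟨φ, hφ, hφC⟩
    have hItop : Tendsto (fun k => I (θs (φ k)) (ϑs (φ k))) atTop (nhds ⊤) :=
      hG1 (fun k => θs (φ k)) (fun k => ϑs (φ k)) (fun k => hθsΘ (φ k))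
        ⟨C, hφC⟩ (hϑtop.comp hφ.tendsto_atTop)
    have hev : ∀ᶠ k in atTop, I (θs (φ k)) (ϑs (φ k)) ∈ Ioi (ENNReal.ofReal r) :=
      hItop.eventually_mem (Ioi_mem_nhds
        (ENNReal.ofReal_lt_top : ENNReal.ofReal r < ⊤))
    rcases hev.exists with ⟨k, hk⟩
    exact absurd (hϑI (φ k)) (not_le.2 hk)
  · push_neg at hbdd
    have hθtop : Tendsto (fun n => ‖θs n‖) atTop atTop := by
      refine tendsto_atTop.2 fun C => ?_
      have hfin : {n : ℕ | ¬ C ≤ ‖θs n‖}.Finite :=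
        (hbdd C).subset fun n hn => (not_le.1 hn).le
      have : ∀ᶠ n in cofinite, C ≤ ‖θs n‖ := Filter.eventually_cofinite.2 hfin
      rw [Nat.cofinite_eq_atTop] at this
      exact this
    -- ratio → ∞
    have hK : ∀ᶠ n in atTop, ‖f (Ts n)‖ ≤ ‖θ0‖ + 1 := by
      have : ∀ᶠ x in nhds θ0, ‖x‖ ≤ ‖θ0‖ + 1 := by
        have h1 : ∀ᶠ x in nhds θ0, ‖x - θ0‖ ≤ 1 := by
          filter_upwards [Metric.closedBall_mem_nhds θ0 one_pos] with x hx
          simpa [dist_eq_norm] using hx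
        filter_upwards [h1] with x hx
        have := norm_sub_norm_le x θ0
        linarith
      exact hftop.eventually this
    have hratio : ∀ᶠ n in atTop, a (Ts n) / 2 - δ ≤ ‖ϑs n‖ / ‖θs n‖ := by
      filter_upwards [hK, hAnn, hθtop.eventually (eventually_ge_atTop (2 * (‖θ0‖ + 1))),
        hθtop.eventually (eventually_ge_atTop 1),
        hθtop.eventually (eventually_ge_atTop (2 * δ))] with n hKn hA hθ2K hθ1 hθδ
      rcases hnlb n with h | h
      · have hD : ‖θs n‖ / 2 ≤ ‖f (Ts n) - θs n‖ := by
          have h1 := norm_sub_norm_le (θs n) (θs n - f (Ts n))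
          have h2 : θs n - (θs n - f (Ts n)) = f (Ts n) := by abel
          rw [h2] at h1
          have h3 : ‖θs n - f (Ts n)‖ = ‖f (Ts n) - θs n‖ := norm_sub_rev _ _
          have hθ01 : 0 ≤ ‖θ0‖ := norm_nonneg _
          linarith
        have hlb : a (Ts n) * (‖θs n‖ / 2) - δ ≤ ‖ϑs n‖ := by nlinarith
        have h0θ : (0:ℝ) < ‖θs n‖ := by linarith
        rw [le_div_iff₀ h0θ]
        nlinarith
      · linarith
    have hrtop : Tendsto (fun n => ‖ϑs n‖ / ‖θs n‖) atTop atTop := by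
      refine tendsto_atTop_mono' atTop hratio ?_
      have h1 : Tendsto (fun n => a (Ts n) / 2) atTop atTop :=
        hAtop.atTop_div_const two_pos
      exact tendsto_atTop_add_const_right atTop (-δ)
        (by simpa [sub_eq_add_neg] using h1) |>.congr (fun n => by ring_nf)
    have hlim : Filter.limsup (fun n => I (θs n) (ϑs n)) atTop = ⊤ :=
      hG2 θs ϑs hθsΘ hθtop hrtop
    have hle : Filter.limsup (fun n => I (θs n) (ϑs n)) atTop ≤ ENNReal.ofReal r :=
      Filter.limsup_le_of_le (by isBoundedDefault) (Filter.Eventually.of_forall hϑI)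
    rw [hlim, top_le_iff] at hle
    exact ENNReal.ofReal_ne_top hle

section ProbHelpers
variable {Ω : Type*} [MeasurableSpace Ω]

/-- If bad events have exponentially small probability but a property `q T` would force the
`1/a_T`-ball event into the bad event, then `q` eventually fails. -/
lemma not_bad_eventually {P : Measure Ω}
    {θhat : ℝ → Ω → E} {a b : ℝ → ℝ}
    {Irate : E → ENNReal} {θ0 : E} (hlow : LDPLowerAt P θhat a b Irate θ0)
    (hI0 : Irate 0 = 0) {r : ℝ} (hr : 0 < r)
    (bad : ℝ → Set Ω)
    (hbad : Filter.limsup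
      (fun T => (((b T)⁻¹ : ℝ) : EReal) * ENNReal.log (P (bad T))) atTop
        ≤ ((-r : ℝ) : EReal))
    (hbnn : ∀ T, 0 ≤ (b T)⁻¹)
    (q : ℝ → Prop)
    (hq : ∀ᶠ T in atTop, q T →
      {ω | a T • (θhat T ω - θ0) ∈ Metric.ball (0 : E) 1} ⊆ bad T) :
    ∀ᶠ T in atTop, ¬ q T := by
  have hG := hlow (Metric.ball (0 : E) 1) Metric.isOpen_ball
  have hinf : (⨅ ϑ ∈ Metric.ball (0 : E) 1, Irate ϑ) = 0 := by
    refine le_antisymm ?_ (zero_le)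
    exact le_trans (iInf₂_le 0 (Metric.mem_ball_self one_pos)) hI0.le
  rw [hinf] at hG
  simp only [EReal.coe_ennreal_zero, neg_zero] at hG
  have h1 : ∀ᶠ T in atTop, ((-(r / 2) : ℝ) : EReal) <
      (((b T)⁻¹ : ℝ) : EReal) *
        ENNReal.log (P {ω | a T • (θhat T ω - θ0) ∈ Metric.ball (0 : E) 1}) := by
    refine eventually_lt_of_lt_liminf (lt_of_lt_of_le ?_ hG)
    exact_mod_cast (by linarith : -(r / 2) < (0 : ℝ))
  have h2 : ∀ᶠ T in atTop, (((b T)⁻¹ : ℝ) : EReal) * ENNReal.log (P (bad T)) <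
      ((-(r / 2) : ℝ) : EReal) := by
    refine eventually_lt_of_limsup_lt (lt_of_le_of_lt hbad ?_)
    exact_mod_cast (by linarith : -r < -(r / 2))
  filter_upwards [h1, h2, hq] with T h1T h2T hqT hQ
  have hmono : P {ω | a T • (θhat T ω - θ0) ∈ Metric.ball (0 : E) 1} ≤ P (bad T) :=
    measure_mono (hqT hQ)
  have hle : (((b T)⁻¹ : ℝ) : EReal) *
      ENNReal.log (P {ω | a T • (θhat T ω - θ0) ∈ Metric.ball (0 : E) 1}) ≤
      (((b T)⁻¹ : ℝ) : EReal) * ENNReal.log (P (bad T)) :=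
    mul_le_mul_of_nonneg_left (ENNReal.log_monotone hmono)
      (by exact_mod_cast hbnn T)
  exact absurd (lt_trans (lt_of_lt_of_le h1T hle) h2T) (lt_irrefl _)

end ProbHelpers

lemma limsup_le_zero_of_forall {u : ℝ → EReal}
    (h : ∀ ε : ℝ, 0 < ε → ∀ᶠ T in atTop, u T ≤ (ε : EReal)) :
    Filter.limsup u atTop ≤ 0 := by
  by_contra hc
  push_neg at hc
  obtain ⟨x, hx0, hxl⟩ := EReal.exists_between_coe_real hc
  have hx0' : (0 : ℝ) < x := by exact_mod_cast hx0
  have : Filter.limsup u atTop ≤ (x : EReal) :=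
    Filter.limsup_le_of_le (by isBoundedDefault) (h x hx0')
  exact absurd (lt_of_lt_of_le hxl this) (lt_irrefl _)

lemma zero_le_liminf_of_forall {u : ℝ → EReal}
    (h : ∀ ε : ℝ, 0 < ε → ∀ᶠ T in atTop, ((-ε : ℝ) : EReal) ≤ u T) :
    (0 : EReal) ≤ Filter.liminf u atTop := by
  by_contra hc
  push_neg at hc
  obtain ⟨x, hxl, hx0⟩ := EReal.exists_between_coe_real hc
  have hx0' : x < (0 : ℝ) := by exact_mod_cast hx0
  have hx : ((-(-x) : ℝ) : EReal) = (x : EReal) := by norm_num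
  have : (x : EReal) ≤ Filter.liminf u atTop := by
    refine Filter.le_liminf_of_le (by isBoundedDefault) ?_
    simpa [hx] using h (-x) (by linarith)
  exact absurd (lt_of_le_of_lt this hxl) (lt_irrefl _)

/-- almost sure eventual containment: if `(H̲_T, H̄_T)` define an
exponentially accurate, eventually equicontinuous interval family and `θ̂_T → θ0`
`P_{θ0}`-a.s., then `P_{θ0}`-a.s.
`limsup (J̄^δ_{T,r}(θ̂_T) − H̄_T(θ̂_T)) ≤ 0` and `liminf (J̲^δ_{T,r}(θ̂_T) − H̲_T(θ̂_T)) ≥ 0`. -/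
theorem stmt14 (Θ : Set E) (hΘ : Θ.Nonempty) (I : E → E → ENNReal) (J : E → ℝ)
    [MeasurableSpace E] [BorelSpace E]
    (P : E → Measure Ω) (hP : ∀ θ, IsProbabilityMeasure (P θ))
    (θhat : ℝ → Ω → E) (hθhatmeas : ∀ T, Measurable (θhat T))
    (b a : ℝ → ℝ) (hbpos : ∀ T, 0 < b T) (hbtop : Tendsto b atTop atTop)
    (hadef : ∀ T, a T = Real.sqrt (T / b T)) (hatop : Tendsto a atTop atTop)
    (hG1 : GrowthG1 Θ I) (hG2 : GrowthG2 Θ I)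
    (hI0 : ∀ θ ∈ Θ, I θ 0 = 0)
    (hJ : ∀ a0 > (0 : ℝ), ∀ θ0 ∈ Θ, UniformContinuousOn J (Metric.closedBall θ0 a0 ∩ Θ))
    (hLDPlow : ∀ θ ∈ Θ, LDPLowerAt (P θ) θhat a b (I θ) θ)
    (hdom : IsOpen Θ ∨ ∀ T > (0 : ℝ), ∀ ω : Ω, θhat T ω ∈ Θ)
    (r δ : ℝ) (hr : 0 < r) (hδ : 0 < δ)
    (Hbar Hlow : ℝ → E → ℝ)
    (hHbarmeas : ∀ T, Measurable (Hbar T)) (hHlowmeas : ∀ T, Measurable (Hlow T))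
    (hHbarequi : ∀ w0 : E, EvEquicontinuousAt Hbar w0)
    (hHlowequi : ∀ w0 : E, EvEquicontinuousAt Hlow w0)
    (haccurate : ∀ θ ∈ Θ,
      Filter.limsup
        (fun T => (((b T)⁻¹ : ℝ) : EReal) *
          ENNReal.log (P θ {ω | ¬(Hlow T (θhat T ω) ≤ J θ ∧ J θ ≤ Hbar T (θhat T ω))}))
        atTop ≤ ((-r : ℝ) : EReal))
    (θ0 : E) (hθ0 : θ0 ∈ Θ)
    (hcons : ∀ᵐ ω ∂(P θ0), Tendsto (fun T => θhat T ω) atTop (nhds θ0)) :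
    ∀ᵐ ω ∂(P θ0),
      Filter.limsup
          (fun T => ((upperCB Θ I J r δ a T (θhat T ω) - Hbar T (θhat T ω) : ℝ) : EReal))
          atTop ≤ 0 ∧
      (0 : EReal) ≤
        Filter.liminf
          (fun T => ((lowerCB Θ I J r δ a T (θhat T ω) - Hlow T (θhat T ω) : ℝ) : EReal))
          atTop := by
  filter_upwards [hcons] with ω hω
  have hbnn : ∀ T, 0 ≤ (b T)⁻¹ := fun T => inv_nonneg.2 (hbpos T).le
  have key : ∀ ε : ℝ, 0 < ε →
      (∀ᶠ T in atTop, upperCB Θ I J r δ a T (θhat T ω) - Hbar T (θhat T ω) ≤ 4 * ε) ∧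
      (∀ᶠ T in atTop, -(4 * ε) ≤ lowerCB Θ I J r δ a T (θhat T ω) - Hlow T (θhat T ω)) := by
    intro ε hε
    -- uniform continuity modulus for J near θ0
    obtain ⟨η0, hη0, hmod⟩ := Metric.uniformContinuousOn_iff.1 (hJ 1 one_pos θ0 hθ0) ε hε
    set η : ℝ := min (η0 / 2) 1 with hηdef
    have hηpos : 0 < η := lt_min (by linarith) one_pos
    have hadm := adm_small (r := r) hatop hG1 hG2 hδ hω hηpos
    -- the estimator is eventually in Θ
    have hΘev : ∀ᶠ T in atTop, θhat T ω ∈ Θ := by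
      rcases hdom with hopen | hin
      · exact hω.eventually_mem (hopen.mem_nhds hθ0)
      · filter_upwards [eventually_gt_atTop (0 : ℝ)] with T hT
        exact hin T hT ω
    -- equicontinuity data
    obtain ⟨δb, hδb, Tb, hTb, hbarc⟩ := hHbarequi θ0 ε hε
    obtain ⟨δl, hδl, Tl, hTl, hlowc⟩ := hHlowequi θ0 ε hε
    have hnear : ∀ᶠ T in atTop, θhat T ω ∈ Metric.closedBall θ0 (min δb δl) :=
      hω.eventually_mem (Metric.closedBall_mem_nhds θ0 (lt_min hδb hδl))
    -- deterministic eventual bounds for Hbar and Hlow at θ0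
    have hbar0 : ∀ᶠ T in atTop, ¬ (Hbar T θ0 < J θ0 - 2 * ε) := by
      refine not_bad_eventually (hLDPlow θ0 hθ0) (hI0 θ0 hθ0) hr _
        (haccurate θ0 hθ0) hbnn _ ?_
      filter_upwards [hatop.eventually (eventually_ge_atTop (max 1 (1 / δb))),
        eventually_ge_atTop Tb] with T haT hTTb hq ω' hω'
      have haT0 : (0 : ℝ) < a T := lt_of_lt_of_le one_pos ((le_max_left _ _).trans haT)
      have hnorm : a T * ‖θhat T ω' - θ0‖ < 1 := by
        have h1 := mem_ball_zero_iff.1 hω'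
        rwa [norm_smul, Real.norm_eq_abs, abs_of_pos haT0] at h1
      have hclose : θhat T ω' ∈ Metric.closedBall θ0 δb := by
        rw [Metric.mem_closedBall, dist_eq_norm]
        by_contra hcl
        push_neg at hcl
        have h1 : 1 / δb ≤ a T := (le_max_right _ _).trans haT
        have h2 : 1 / δb * δb ≤ a T * ‖θhat T ω' - θ0‖ := by
          apply mul_le_mul h1 hcl.le hδb.le haT0.le
        rw [one_div_mul_cancel hδb.ne'] at h2
        linarith
      have habs := abs_lt.1 (hbarc T hTTb (θhat T ω') hclose)
      have hlt : Hbar T (θhat T ω') < J θ0 := by linarith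
      simp only [Set.mem_setOf_eq]
      exact fun hP => absurd hP.2 (not_le.2 hlt)
    have hlow0 : ∀ᶠ T in atTop, ¬ (J θ0 + 2 * ε < Hlow T θ0) := by
      refine not_bad_eventually (hLDPlow θ0 hθ0) (hI0 θ0 hθ0) hr _
        (haccurate θ0 hθ0) hbnn _ ?_
      filter_upwards [hatop.eventually (eventually_ge_atTop (max 1 (1 / δl))),
        eventually_ge_atTop Tl] with T haT hTTl hq ω' hω'
      have haT0 : (0 : ℝ) < a T := lt_of_lt_of_le one_pos ((le_max_left _ _).trans haT)
      have hnorm : a T * ‖θhat T ω' - θ0‖ < 1 := by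
        have h1 := mem_ball_zero_iff.1 hω'
        rwa [norm_smul, Real.norm_eq_abs, abs_of_pos haT0] at h1
      have hclose : θhat T ω' ∈ Metric.closedBall θ0 δl := by
        rw [Metric.mem_closedBall, dist_eq_norm]
        by_contra hcl
        push_neg at hcl
        have h1 : 1 / δl ≤ a T := (le_max_right _ _).trans haT
        have h2 : 1 / δl * δl ≤ a T * ‖θhat T ω' - θ0‖ := by
          apply mul_le_mul h1 hcl.le hδl.le haT0.le
        rw [one_div_mul_cancel hδl.ne'] at h2
        linarith
      have habs := abs_lt.1 (hlowc T hTTl (θhat T ω') hclose)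
      have hlt : J θ0 < Hlow T (θhat T ω') := by linarith
      simp only [Set.mem_setOf_eq]
      exact fun hP => absurd hP.1 (not_le.2 hlt)
    -- pointwise inequalities for J on the admissible set
    have hJbound : ∀ θ ∈ Θ, ‖θ - θ0‖ ≤ η → |J θ - J θ0| < ε := by
      intro θ hθΘ hd
      have hθball : θ ∈ Metric.closedBall θ0 1 ∩ Θ := by
        refine ⟨?_, hθΘ⟩
        rw [Metric.mem_closedBall, dist_eq_norm]
        exact hd.trans (min_le_right _ _)
      have hθ0ball : θ0 ∈ Metric.closedBall θ0 1 ∩ Θ :=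
        ⟨Metric.mem_closedBall_self one_pos.le, hθ0⟩
      have hdd : dist θ θ0 < η0 := by
        rw [dist_eq_norm]
        exact lt_of_le_of_lt (hd.trans (min_le_left _ _)) (by linarith)
      have := hmod θ hθball θ0 hθ0ball hdd
      rwa [Real.dist_eq] at this
    constructor
    · filter_upwards [hadm, hΘev, hnear, hbar0, eventually_ge_atTop Tb] with T hadmT hΘT
        hnearT hbar0T hTbT
      push_neg at hbar0T
      have hself : θhat T ω ∈
          {θ : E | θ ∈ Θ ∧ a T • (θhat T ω - θ) ∈ fatSublevel I θ r δ} := by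
        refine ⟨hΘT, ?_⟩
        rw [sub_self, smul_zero]
        exact (mem_fatSublevel_pos hδ).2
          ⟨0, by rw [hI0 (θhat T ω) hΘT]; exact zero_le, by simpa using hδ⟩
      have hub : ∀ x ∈ J '' {θ : E | θ ∈ Θ ∧ a T • (θhat T ω - θ) ∈ fatSublevel I θ r δ},
          x ≤ J θ0 + ε := by
        rintro x ⟨θ, hθ, rfl⟩
        have hd : ‖θ - θ0‖ ≤ η := hadmT θ hθ.1 hθ.2
        have := (abs_lt.1 (hJbound θ hθ.1 hd)).2
        linarith
      have hupper : upperCB Θ I J r δ a T (θhat T ω) ≤ J θ0 + ε :=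
        csSup_le (Set.Nonempty.image J ⟨θhat T ω, hself⟩) hub
      have hbb := (abs_lt.1 (hbarc T hTbT (θhat T ω)
        (Metric.closedBall_subset_closedBall (min_le_left δb δl) hnearT))).1
      linarith
    · filter_upwards [hadm, hΘev, hnear, hlow0, eventually_ge_atTop Tl] with T hadmT hΘT
        hnearT hlow0T hTlT
      push_neg at hlow0T
      have hself : θhat T ω ∈
          {θ : E | θ ∈ Θ ∧ a T • (θhat T ω - θ) ∈ fatSublevel I θ r δ} := by
        refine ⟨hΘT, ?_⟩
        rw [sub_self, smul_zero]
        exact (mem_fatSublevel_pos hδ).2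
          ⟨0, by rw [hI0 (θhat T ω) hΘT]; exact zero_le, by simpa using hδ⟩
      have hlb : ∀ x ∈ J '' {θ : E | θ ∈ Θ ∧ a T • (θhat T ω - θ) ∈ fatSublevel I θ r δ},
          J θ0 - ε ≤ x := by
        rintro x ⟨θ, hθ, rfl⟩
        have hd : ‖θ - θ0‖ ≤ η := hadmT θ hθ.1 hθ.2
        have := (abs_lt.1 (hJbound θ hθ.1 hd)).1
        linarith
      have hlower : J θ0 - ε ≤ lowerCB Θ I J r δ a T (θhat T ω) :=
        le_csInf (Set.Nonempty.image J ⟨θhat T ω, hself⟩) hlb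
      have hbb := (abs_lt.1 (hlowc T hTlT (θhat T ω)
        (Metric.closedBall_subset_closedBall (min_le_right δb δl) hnearT))).2
      linarith
  refine ⟨limsup_le_zero_of_forall fun ε hε => ?_, zero_le_liminf_of_forall fun ε hε => ?_⟩
  · filter_upwards [(key (ε / 4) (by linarith)).1] with T hT
    exact EReal.coe_le_coe_iff.2 (by linarith)
  · filter_upwards [(key (ε / 4) (by linarith)).2] with T hT
    exact EReal.coe_le_coe_iff.2 (by linarith)
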